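/- A countable disjoint union (topological sum) of quasi-Polish spaces is quasi-Polish. -/

import Mathlib

open TopologicalSpace Set Topology

/-- A Π⁰₂ set: a countable intersection of sets of the form (complement of open) ∪ open. -/
def IsPi02 {X : Type*} [TopologicalSpace X] (s : Set X) : Prop :=
  ∃ U V : ℕ → Set X, (∀ n, IsOpen (U n)) ∧ (∀ n, IsOpen (V n)) ∧
    s = ⋂ n, ((U n)ᶜ ∪ V n)

/-- A quasi-Polish space: homeomorphic to a Π⁰₂ subspace of 𝕊^ℕ,
where 𝕊 is the Sierpiński space (`Prop` with its topology in Mathlib). -/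
def QuasiPolish (X : Type*) [TopologicalSpace X] : Prop :=
  ∃ s : Set (ℕ → Prop), IsPi02 s ∧ Nonempty (X ≃ₜ s)

section Aux

variable {Y : Type*} [TopologicalSpace Y]

lemma isPi02_univ : IsPi02 (univ : Set Y) :=
  ⟨fun _ => ∅, fun _ => ∅, fun _ => isOpen_empty, fun _ => isOpen_empty, by simp⟩

/-- A countable intersection of sets of the form `Uᶜ ∪ V` with `U`, `V` open is Π⁰₂. -/
lemma isPi02_iInter' {κ : Type*} [Countable κ] {C : κ → Set Y}
    (h : ∀ k, ∃ U V : Set Y, IsOpen U ∧ IsOpen V ∧ C k = Uᶜ ∪ V) :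
    IsPi02 (⋂ k, C k) := by
  choose U V hU hV hC using h
  rcases isEmpty_or_nonempty κ with hk | hk
  · simpa [iInter_of_empty] using isPi02_univ (Y := Y)
  · obtain ⟨f, hf⟩ := exists_surjective_nat κ
    refine ⟨fun n => U (f n), fun n => V (f n), fun n => hU _, fun n => hV _, ?_⟩
    ext x
    simp only [mem_iInter]
    constructor
    · intro hx n
      have := hx (f n)
      rw [hC (f n)] at this
      exact this
    · intro hx k
      obtain ⟨n, rfl⟩ := hf k
      rw [hC (f n)]
      exact hx n

/-- A countable intersection of Π⁰₂ sets is Π⁰₂. -/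
lemma isPi02_iInter {κ : Type*} [Countable κ] {C : κ → Set Y}
    (h : ∀ k, IsPi02 (C k)) : IsPi02 (⋂ k, C k) := by
  choose U V hU hV hC using h
  have : ⋂ k, C k = ⋂ q : κ × ℕ, ((U q.1 q.2)ᶜ ∪ V q.1 q.2) := by
    ext x
    simp only [mem_iInter]
    constructor
    · intro hx q
      have := hx q.1
      rw [hC q.1] at this
      exact mem_iInter.mp this q.2
    · intro hx k
      rw [hC k]
      exact mem_iInter.mpr fun m => hx (k, m)
  rw [this]
  exact isPi02_iInter' fun q => ⟨U q.1 q.2, V q.1 q.2, hU q.1 q.2, hV q.1 q.2, rfl⟩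

lemma IsOpen.isPi02 {s : Set Y} (hs : IsOpen s) : IsPi02 s :=
  ⟨fun _ => univ, fun _ => s, fun _ => isOpen_univ, fun _ => hs, by simp [iInter_const]⟩

lemma IsPi02.inter {s t : Set Y} (hs : IsPi02 s) (ht : IsPi02 t) : IsPi02 (s ∩ t) := by
  have : s ∩ t = ⋂ b : Bool, (if b then s else t) := by
    ext x; simp [Bool.forall_bool]; tauto
  rw [this]
  exact isPi02_iInter fun b => by cases b <;> simpa

lemma IsPi02.preimage {Z : Type*} [TopologicalSpace Z] {s : Set Y}
    (hs : IsPi02 s) {f : Z → Y} (hf : Continuous f) : IsPi02 (f ⁻¹' s) := by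
  obtain ⟨U, V, hU, hV, rfl⟩ := hs
  exact ⟨fun n => f ⁻¹' U n, fun n => f ⁻¹' V n, fun n => (hU n).preimage hf,
    fun n => (hV n).preimage hf, by simp [preimage_iInter]⟩

lemma isOpen_eval_fst (n : ℕ) :
    IsOpen {p : (ℕ → Prop) × (ℕ → Prop) | p.1 n} := by
  have h1 : {p : (ℕ → Prop) × (ℕ → Prop) | p.1 n} = (fun p : (ℕ → Prop) × (ℕ → Prop) => p.1 n) ⁻¹' {q : Prop | q} := rfl
  have h2 : ({q : Prop | q} : Set Prop) = {True} := by
    ext q; simp [eq_iff_iff]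
  rw [h1, h2]
  exact isOpen_singleton_true.preimage ((continuous_apply n).comp continuous_fst)

end Aux

theorem quasiPolish_sigma {ι : Type*} [Countable ι] (X : ι → Type*)
    [∀ i, TopologicalSpace (X i)] (h : ∀ i, QuasiPolish (X i)) :
    QuasiPolish (Σ i, X i) := by
  classical
  obtain ⟨e, he⟩ := Countable.exists_injective_nat ι
  choose s hs hne using h
  choose U V hU hV hsEq using hs
  let φ : ∀ i, X i ≃ₜ s i := fun i => (hne i).some
  let g : ∀ i, X i → (ℕ → Prop) := fun i x => ((φ i x : ℕ → Prop))
  have hgc : ∀ i, Continuous (g i) := fun i => continuous_subtype_val.comp (φ i).continuous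
  have hginj : ∀ i, Function.Injective (g i) :=
    fun i => Subtype.val_injective.comp (φ i).injective
  have hgmem : ∀ i x, g i x ∈ s i := fun i x => (φ i x).2
  set P := (ℕ → Prop) × (ℕ → Prop) with hP
  let F : (Σ i, X i) → P := fun p => (fun n => n = e p.1, g p.1 p.2)
  have hFcont : Continuous F :=
    continuous_sigma fun i =>
      show Continuous fun a : X i => ((fun n => (n = e i : Prop), g i a) : P) from
        Continuous.prodMk continuous_const (hgc i)
  have hFinj : Function.Injective F := by
    rintro ⟨i, x⟩ ⟨j, y⟩ hxy
    have h1 : (fun n => (n = e i : Prop)) = fun n => (n = e j : Prop) :=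
      congrArg Prod.fst hxy
    have h2 : ((e i = e i : Prop)) = ((e i = e j : Prop)) := congrFun h1 (e i)
    have hij : i = j := he (h2 ▸ rfl)
    subst hij
    have h3 : g i x = g i y := congrArg Prod.snd hxy
    rw [hginj i h3]
  -- for every open set of `X i` there is an open set of `ℕ → Prop` pulling back to it
  have key : ∀ (i : ι) (O : Set (X i)), IsOpen O →
      ∃ W : Set (ℕ → Prop), IsOpen W ∧ g i ⁻¹' W = O := by
    intro i O hO
    have h1 : IsOpen ((φ i) '' O) := (φ i).isOpen_image.mpr hO
    obtain ⟨W, hW, hWeq⟩ := IsInducing.subtypeVal.isOpen_iff.mp h1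
    refine ⟨W, hW, ?_⟩
    have h2 : g i ⁻¹' W = (φ i) ⁻¹' (Subtype.val ⁻¹' W) := rfl
    rw [h2, hWeq, Set.preimage_image_eq O (φ i).injective]
  have hFind : Topology.IsInducing F := by
    refine ⟨le_antisymm (continuous_iff_le_induced.mp hFcont) ?_⟩
    rw [TopologicalSpace.le_def]
    intro O hO
    choose Wf hWf hWfeq using fun i => key i (Sigma.mk i ⁻¹' O) (isOpen_sigma_iff.mp hO i)
    rw [isOpen_induced_iff]
    refine ⟨⋃ i, {p : P | p.1 (e i)} ∩ (Prod.snd ⁻¹' Wf i),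
      isOpen_iUnion fun i => (isOpen_eval_fst (e i)).inter ((hWf i).preimage continuous_snd), ?_⟩
    ext ⟨j, x⟩
    simp only [mem_preimage, mem_iUnion, mem_inter_iff, mem_setOf_eq]
    constructor
    · rintro ⟨i, hflag, hmem⟩
      have hij : i = j := he hflag
      subst hij
      have : x ∈ g i ⁻¹' Wf i := hmem
      rw [hWfeq i] at this
      exact this
    · intro hx
      refine ⟨j, rfl, ?_⟩
      have : x ∈ g j ⁻¹' Wf j := by rw [hWfeq j]; exact hx
      exact this
  have hFemb : Topology.IsEmbedding F := ⟨hFind, hFinj⟩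
  -- characterize the range of F
  let T1 : Set P := ⋃ i, {p : P | p.1 (e i)}
  let T2 : Set P := ⋂ q : ℕ × ℕ,
    (if q.1 = q.2 then univ else {p : P | p.1 q.1 ∧ p.1 q.2}ᶜ)
  let T4 : Set P := ⋂ q : ι × ℕ,
    ({p : P | p.1 (e q.1) ∧ p.2 ∈ U q.1 q.2}ᶜ ∪ {p : P | p.2 ∈ V q.1 q.2})
  have hrange : range F = (T1 ∩ T2) ∩ T4 := by
    ext p
    constructor
    · rintro ⟨⟨i, x⟩, rfl⟩
      refine ⟨⟨mem_iUnion.mpr ⟨i, rfl⟩, ?_⟩, ?_⟩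
      · refine mem_iInter.mpr fun q => ?_
        split_ifs with hq
        · trivial
        · intro hmem
          rcases hmem with ⟨h1, h2⟩
          exact hq (h1.trans h2.symm)
      · refine mem_iInter.mpr fun q => ?_
        by_cases hq : q.1 = i
        · subst hq
          have hb : g q.1 x ∈ s q.1 := hgmem q.1 x
          rw [hsEq q.1] at hb
          have := mem_iInter.mp hb q.2
          rcases this with hl | hr
          · exact Or.inl fun hmem => hl hmem.2
          · exact Or.inr hr
        · exact Or.inl fun hmem => hq (he hmem.1)
    · rintro ⟨⟨h1, h2⟩, h4⟩
      obtain ⟨i, hi⟩ := mem_iUnion.mp h1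
      have hi : p.1 (e i) := hi
      have flag_eq : p.1 = fun n => (n = e i : Prop) := by
        funext n
        refine propext ⟨fun hn => ?_, fun hn => hn ▸ hi⟩
        have := mem_iInter.mp h2 (n, e i)
        by_cases hq : n = e i
        · exact hq
        · rw [if_neg hq] at this
          exact absurd ⟨hn, hi⟩ this
      have hb : p.2 ∈ s i := by
        rw [hsEq i]
        refine mem_iInter.mpr fun m => ?_
        have := mem_iInter.mp h4 (i, m)
        rcases this with hl | hr
        · exact Or.inl fun hUm => hl ⟨hi, hUm⟩
        · exact Or.inr hr
      refine ⟨⟨i, (φ i).symm ⟨p.2, hb⟩⟩, ?_⟩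
      have hg2 : g i ((φ i).symm ⟨p.2, hb⟩) = p.2 := by
        show ((φ i ((φ i).symm ⟨p.2, hb⟩) : s i) : ℕ → Prop) = p.2
        rw [(φ i).apply_symm_apply]
      exact Prod.ext flag_eq.symm hg2
  have hPi : IsPi02 (range F) := by
    rw [hrange]
    have hT1 : IsPi02 T1 :=
      (isOpen_iUnion fun i => isOpen_eval_fst (e i)).isPi02
    have hT2 : IsPi02 T2 := by
      refine isPi02_iInter' fun q => ?_
      by_cases hq : q.1 = q.2
      · exact ⟨∅, ∅, isOpen_empty, isOpen_empty, by simp [hq]⟩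
      · exact ⟨{p : P | p.1 q.1 ∧ p.1 q.2}, ∅, by
          have : {p : P | p.1 q.1 ∧ p.1 q.2}
              = {p : P | p.1 q.1} ∩ {p : P | p.1 q.2} := rfl
          rw [this]; exact (isOpen_eval_fst q.1).inter (isOpen_eval_fst q.2),
          isOpen_empty, by simp [hq]⟩
    have hT4 : IsPi02 T4 := by
      refine isPi02_iInter' fun q => ?_
      refine ⟨{p : P | p.1 (e q.1) ∧ p.2 ∈ U q.1 q.2}, {p : P | p.2 ∈ V q.1 q.2}, ?_, ?_, rfl⟩
      · have : {p : P | p.1 (e q.1) ∧ p.2 ∈ U q.1 q.2}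
            = {p : P | p.1 (e q.1)} ∩ (Prod.snd ⁻¹' U q.1 q.2) := rfl
        rw [this]
        exact (isOpen_eval_fst (e q.1)).inter ((hU q.1 q.2).preimage continuous_snd)
      · exact (hV q.1 q.2).preimage continuous_snd
    exact (hT1.inter hT2).inter hT4
  let ψ : P ≃ₜ (ℕ → Prop) :=
    Homeomorph.sumArrowHomeomorphProdArrow.symm.trans
      (Homeomorph.piCongrLeft (Y := fun _ : ℕ => Prop) (Denumerable.eqv (ℕ ⊕ ℕ)))
  refine ⟨ψ '' (range F), ?_, ⟨(Topology.IsEmbedding.toHomeomorph hFemb).trans (ψ.image (range F))⟩⟩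
  rw [show ψ '' (range F) = ψ.symm ⁻¹' (range F) from ψ.toEquiv.image_eq_preimage_symm (range F)]
  exact hPi.preimage ψ.symm.continuous
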